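/- Upper bound on the increase in polarization: if s, s' ∈ [0,1]^n with ||s' - s||_0 ≤ k, and z = (I+L)^{-1} s, z' = (I+L)^{-1} s' have polarizations P = Σ_i (z_i - z̄)^2 and P' = Σ_i (z'_i - z̄')^2, then P' ≤ P + 3k. -/

import Mathlib

open Matrix BigOperators
open scoped NNReal

attribute [local instance] Matrix.linftyOpNormedRing Matrix.linftyOpNormedAlgebra

noncomputable local instance matCS {m : ℕ} : CompleteSpace (Matrix (Fin m) (Fin m) ℝ) :=
  FiniteDimensional.complete ℝ _

lemma abs_entry_le_norm {m : ℕ} (A : Matrix (Fin m) (Fin m) ℝ) (i j : Fin m) : |A i j| ≤ ‖A‖ := by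
  rw [Matrix.linfty_opNorm_def]
  have h1 : ‖A i j‖₊ ≤ ∑ j', ‖A i j'‖₊ :=
    Finset.single_le_sum (f := fun j' => ‖A i j'‖₊) (fun _ _ => zero_le) (Finset.mem_univ j)
  have h2 : (∑ j', ‖A i j'‖₊) ≤ Finset.univ.sup fun i => ∑ j, ‖A i j‖₊ :=
    Finset.le_sup (f := fun i => ∑ j, ‖A i j‖₊) (Finset.mem_univ i)
  calc |A i j| = ((‖A i j‖₊ : ℝ≥0) : ℝ) := by simp [Real.norm_eq_abs]
    _ ≤ _ := by exact_mod_cast h1.trans h2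

lemma pow_entry_nonneg {m : ℕ} {B : Matrix (Fin m) (Fin m) ℝ} (hB : ∀ i j, 0 ≤ B i j) :
    ∀ (N : ℕ) (i j : Fin m), 0 ≤ (B ^ N) i j := by
  intro N
  induction N with
  | zero => intro i j; rw [pow_zero]; by_cases h : i = j <;> simp [Matrix.one_apply, h]
  | succ k ih =>
    intro i j
    rw [pow_succ, Matrix.mul_apply]
    exact Finset.sum_nonneg fun l _ => mul_nonneg (ih i l) (hB l j)

lemma inv_good {m : ℕ} (W : Matrix (Fin m) (Fin m) ℝ) (hsymm : W.IsSymm)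
    (hnn : ∀ i j, 0 ≤ W i j) :
    IsUnit ((1 : Matrix (Fin m) (Fin m) ℝ) + (Matrix.diagonal (fun i => ∑ j, W i j) - W)).det ∧
    (∀ i j, 0 ≤ ((1 : Matrix (Fin m) (Fin m) ℝ) + (Matrix.diagonal (fun i => ∑ j, W i j) - W))⁻¹ i j) ∧
    (∀ i, ∑ j, ((1 : Matrix (Fin m) (Fin m) ℝ) + (Matrix.diagonal (fun i => ∑ j, W i j) - W))⁻¹ i j = 1) ∧
    (∀ j, ∑ i, ((1 : Matrix (Fin m) (Fin m) ℝ) + (Matrix.diagonal (fun i => ∑ j, W i j) - W))⁻¹ i j = 1) := by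
  set d : Fin m → ℝ := fun i => ∑ j, W i j with hd
  set M : Matrix (Fin m) (Fin m) ℝ := 1 + (Matrix.diagonal d - W) with hM
  have hd0 : ∀ i, 0 ≤ d i := fun i => Finset.sum_nonneg fun j _ => hnn i j
  have hD : ∀ i, 0 < 1 + d i := fun i => by linarith [hd0 i]
  set B : Matrix (Fin m) (Fin m) ℝ := Matrix.of fun i j => W i j / (1 + d i) with hBdef
  have hB0 : ∀ i j, 0 ≤ B i j := fun i j => div_nonneg (hnn i j) (hD i).le
  -- norm of B < 1
  have hBnorm : ‖B‖ < 1 := by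
    rw [Matrix.linfty_opNorm_def]
    have : (Finset.univ.sup fun i => ∑ j, ‖B i j‖₊) < 1 := by
      rw [Finset.sup_lt_iff (by norm_num : (⊥ : ℝ≥0) < 1)]
      intro i _
      refine NNReal.coe_lt_coe.1 ?_
      push_cast
      have : ∀ j, ((‖B i j‖₊ : ℝ≥0) : ℝ) = B i j := fun j => by
        simp [Real.norm_eq_abs, abs_of_nonneg (hB0 i j)]
      calc (∑ j, ((‖B i j‖₊ : ℝ≥0) : ℝ)) = ∑ j, B i j := Finset.sum_congr rfl fun j _ => this j
        _ = d i / (1 + d i) := by rw [hBdef]; simp only [Matrix.of_apply]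
                                  rw [← Finset.sum_div]
        _ < 1 := by rw [div_lt_one (hD i)]; linarith
    exact_mod_cast this
  -- factorization
  have hfact : M = Matrix.diagonal (fun i => 1 + d i) * (1 - B) := by
    ext i j
    rw [Matrix.diagonal_mul, hM, hBdef]
    simp only [Matrix.add_apply, Matrix.sub_apply, Matrix.one_apply, Matrix.diagonal_apply,
      Matrix.of_apply]
    by_cases h : i = j
    · subst h
      rw [if_pos rfl, if_pos rfl, mul_sub, mul_one, mul_div_assoc',
        mul_div_cancel_left₀ _ (hD i).ne']
      ring
    · simp only [if_neg h]
      field_simp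
      rw [mul_sub, mul_zero, mul_div_assoc', mul_div_cancel_left₀ _ (hD i).ne']; ring
  have hu1 : IsUnit ((1 : Matrix (Fin m) (Fin m) ℝ) - B) := isUnit_one_sub_of_norm_lt_one hBnorm
  have hud : IsUnit (Matrix.diagonal (fun i => 1 + d i)) := by
    rw [Matrix.isUnit_iff_isUnit_det, Matrix.det_diagonal, isUnit_iff_ne_zero]
    exact Finset.prod_ne_zero_iff.2 fun i _ => (hD i).ne'
  have hM_unit : IsUnit M := by rw [hfact]; exact hud.mul hu1
  have hMdet : IsUnit M.det := (Matrix.isUnit_iff_isUnit_det M).1 hM_unit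
  have hdet1 : IsUnit ((1 : Matrix (Fin m) (Fin m) ℝ) - B).det :=
    (Matrix.isUnit_iff_isUnit_det _).1 hu1
  set C : Matrix (Fin m) (Fin m) ℝ := ((1 : Matrix (Fin m) (Fin m) ℝ) - B)⁻¹ with hC
  have hCmul : ((1 : Matrix (Fin m) (Fin m) ℝ) - B) * C = 1 := Matrix.mul_nonsing_inv _ hdet1
  -- nonnegativity of C
  have hC0 : ∀ i j, 0 ≤ C i j := by
    intro i j
    by_contra hneg
    push_neg at hneg
    obtain ⟨N0, hN0⟩ := exists_pow_lt_of_lt_one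
      (show (0:ℝ) < (-C i j) / (‖C‖ + 1) from
        div_pos (by linarith) (by positivity)) hBnorm
    set N := N0 + 1 with hNdef
    have hN : ‖B‖ ^ N < (-C i j) / (‖C‖ + 1) := by
      have h1 : ‖B‖ ^ N ≤ ‖B‖ ^ N0 := by
        rw [hNdef, pow_succ]
        exact mul_le_of_le_one_right (pow_nonneg (norm_nonneg _) _) hBnorm.le
      linarith
    have hgeom : (∑ l ∈ Finset.range N, B ^ l) * (1 - B) = 1 - B ^ N := by
      rw [← neg_sub B 1, mul_neg, geom_sum_mul, neg_sub]
    have hid : (∑ l ∈ Finset.range N, B ^ l) = C - B ^ N * C := by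
      have := congrArg (· * C) hgeom
      simp only [mul_assoc, hCmul, mul_one, sub_mul, one_mul] at this
      exact this
    have hErr : |(B ^ N * C) i j| ≤ ‖B‖ ^ N * ‖C‖ := by
      calc |(B ^ N * C) i j| ≤ ‖B ^ N * C‖ := abs_entry_le_norm _ i j
        _ ≤ ‖B ^ N‖ * ‖C‖ := norm_mul_le _ _
        _ ≤ ‖B‖ ^ N * ‖C‖ := by
            gcongr
            exact norm_pow_le' _ (Nat.succ_pos _)
    have hS : 0 ≤ (∑ l ∈ Finset.range N, B ^ l) i j := by
      rw [Matrix.sum_apply]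
      exact Finset.sum_nonneg fun l _ => pow_entry_nonneg hB0 l i j
    rw [hid, Matrix.sub_apply] at hS
    have hbound : ‖B‖ ^ N * ‖C‖ < -C i j := by
      have hq : (-C i j) / (‖C‖ + 1) * (‖C‖ + 1) = -C i j :=
        div_mul_cancel₀ _ (by positivity)
      have h1 : ‖B‖ ^ N * ‖C‖ ≤ ((-C i j) / (‖C‖ + 1)) * ‖C‖ :=
        mul_le_mul_of_nonneg_right hN.le (norm_nonneg _)
      have h2 : (0:ℝ) ≤ ‖B‖ ^ N := pow_nonneg (norm_nonneg _) _
      nlinarith [norm_nonneg C]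
    have := (abs_le.1 hErr).2
    have := (abs_le.1 hErr).1
    linarith
  -- inverse formula
  have hDinv : (Matrix.diagonal (fun i => 1 + d i))⁻¹
      = Matrix.diagonal (fun i => (1 + d i)⁻¹) :=
    Matrix.inv_eq_right_inv (by
      rw [Matrix.diagonal_mul_diagonal]
      have : (fun i => (1 + d i) * (1 + d i)⁻¹) = fun _ => (1:ℝ) := by
        funext i; exact mul_inv_cancel₀ (hD i).ne'
      rw [this, Matrix.diagonal_one])
  have hMinv : M⁻¹ = C * Matrix.diagonal (fun i => (1 + d i)⁻¹) := by
    rw [hfact, Matrix.mul_inv_rev, hDinv, hC]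
  have hinv0 : ∀ i j, 0 ≤ M⁻¹ i j := by
    intro i j
    rw [hMinv, Matrix.mul_diagonal]
    exact mul_nonneg (hC0 i j) (inv_nonneg.2 (hD j).le)
  -- row sums
  have hMones : M *ᵥ (fun _ => (1:ℝ)) = fun _ => 1 := by
    funext i
    simp only [Matrix.mulVec, dotProduct, mul_one, hM, Matrix.add_apply, Matrix.sub_apply,
      Matrix.one_apply, Matrix.diagonal_apply, Finset.sum_add_distrib, Finset.sum_sub_distrib,
      Finset.sum_ite_eq, Finset.mem_univ, if_true]
    simp [hd]
  have hrows : ∀ i, ∑ j, M⁻¹ i j = 1 := by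
    have h1 : M⁻¹ *ᵥ (fun _ => (1:ℝ)) = fun _ => 1 := by
      conv_lhs => rw [← hMones]
      rw [Matrix.mulVec_mulVec, Matrix.nonsing_inv_mul _ hMdet, Matrix.one_mulVec]
    intro i
    have := congrFun h1 i
    simpa [Matrix.mulVec, dotProduct] using this
  have hMsym : Mᵀ = M := by
    rw [hM, Matrix.transpose_add, Matrix.transpose_sub, Matrix.transpose_one,
      Matrix.diagonal_transpose, hsymm]
  have hinvsym : ∀ i j, M⁻¹ i j = M⁻¹ j i := by
    intro i j
    conv_rhs => rw [← Matrix.transpose_apply M⁻¹ i j, Matrix.transpose_nonsing_inv, hMsym]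
  refine ⟨hMdet, hinv0, hrows, fun j => ?_⟩
  calc ∑ i, M⁻¹ i j = ∑ i, M⁻¹ j i := Finset.sum_congr rfl fun i _ => hinvsym i j
    _ = 1 := hrows j

/-- upper bound on the increase in polarization: P' ≤ P + 3k. -/
theorem polarization_increase_le {n k : ℕ} (W : Matrix (Fin n) (Fin n) ℝ)
    (hsymm : W.IsSymm) (hnn : ∀ i j, 0 ≤ W i j) (hdiag : ∀ i, W i i = 0)
    (s s' : Fin n → ℝ)
    (hs : ∀ i, s i ∈ Set.Icc (0 : ℝ) 1) (hs' : ∀ i, s' i ∈ Set.Icc (0 : ℝ) 1)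
    (hk : (Finset.univ.filter fun a => s' a ≠ s a).card ≤ k)
    (z z' : Fin n → ℝ)
    (hz : z = (1 + (Matrix.diagonal (fun i => ∑ j, W i j) - W))⁻¹ *ᵥ s)
    (hz' : z' = (1 + (Matrix.diagonal (fun i => ∑ j, W i j) - W))⁻¹ *ᵥ s') :
    ∑ i, (z' i - (1 / (n : ℝ)) * ∑ j, z' j) ^ 2 ≤
      (∑ i, (z i - (1 / (n : ℝ)) * ∑ j, z j) ^ 2) + 3 * (k : ℝ) := by
  rcases Nat.eq_zero_or_pos n with hn | hn
  · subst hn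
    simp
  obtain ⟨hMdet, hA0, hrow, hcol⟩ := inv_good W hsymm hnn
  set A := ((1 : Matrix (Fin n) (Fin n) ℝ) + (Matrix.diagonal (fun i => ∑ j, W i j) - W))⁻¹
    with hAdef
  have hnR : (0:ℝ) < (n:ℝ) := by exact_mod_cast hn
  have hzi : ∀ i, z i = ∑ j, A i j * s j := by
    intro i; rw [hz]; simp [Matrix.mulVec, dotProduct]
  have hzi' : ∀ i, z' i = ∑ j, A i j * s' j := by
    intro i; rw [hz']; simp [Matrix.mulVec, dotProduct]
  -- z, z' ∈ [0,1]
  have hrange : ∀ (v : Fin n → ℝ), (∀ j, v j ∈ Set.Icc (0:ℝ) 1) →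
      ∀ i, 0 ≤ (∑ j, A i j * v j) ∧ (∑ j, A i j * v j) ≤ 1 := by
    intro v hv i
    constructor
    · exact Finset.sum_nonneg fun j _ => mul_nonneg (hA0 i j) (hv j).1
    · calc ∑ j, A i j * v j ≤ ∑ j, A i j * 1 :=
            Finset.sum_le_sum fun j _ => mul_le_mul_of_nonneg_left (hv j).2 (hA0 i j)
        _ = 1 := by simpa using hrow i
  have hz01 : ∀ i, 0 ≤ z i ∧ z i ≤ 1 := fun i => by
    rw [hzi]; exact hrange s hs i
  have hz01' : ∀ i, 0 ≤ z' i ∧ z' i ≤ 1 := fun i => by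
    rw [hzi']; exact hrange s' hs' i
  -- total variation bound
  have hT : ∑ i, |z' i - z i| ≤ (k:ℝ) := by
    have step1 : ∀ i, |z' i - z i| ≤ ∑ j, A i j * |s' j - s j| := by
      intro i
      rw [hzi, hzi']
      calc |∑ j, A i j * s' j - ∑ j, A i j * s j| = |∑ j, A i j * (s' j - s j)| := by
            rw [← Finset.sum_sub_distrib]; congr 1; exact Finset.sum_congr rfl fun j _ => by ring
        _ ≤ ∑ j, |A i j * (s' j - s j)| := Finset.abs_sum_le_sum_abs _ _
        _ = ∑ j, A i j * |s' j - s j| := Finset.sum_congr rfl fun j _ => by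
              rw [abs_mul, abs_of_nonneg (hA0 i j)]
    calc ∑ i, |z' i - z i| ≤ ∑ i, ∑ j, A i j * |s' j - s j| :=
          Finset.sum_le_sum fun i _ => step1 i
      _ = ∑ j, (∑ i, A i j) * |s' j - s j| := by
          rw [Finset.sum_comm]
          exact Finset.sum_congr rfl fun j _ => by rw [Finset.sum_mul]
      _ = ∑ j, |s' j - s j| := Finset.sum_congr rfl fun j _ => by rw [hcol j, one_mul]
      _ = ∑ j ∈ Finset.univ.filter (fun a => s' a ≠ s a), |s' j - s j| := by
          symm
          apply Finset.sum_filter_of_ne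
          intro j _ hne h
          exact hne (by rw [h, sub_self, abs_zero])
      _ ≤ ∑ j ∈ Finset.univ.filter (fun a => s' a ≠ s a), 1 := by
          apply Finset.sum_le_sum
          intro j _
          have h1 := hs j; have h2 := hs' j
          rw [abs_le]
          constructor <;> [linarith [h1.2, h2.1]; linarith [h1.1, h2.2]]
      _ = ((Finset.univ.filter (fun a => s' a ≠ s a)).card : ℝ) := by simp
      _ ≤ (k:ℝ) := by exact_mod_cast hk
  -- means
  set mz := (1 / (n : ℝ)) * ∑ j, z j with hmz
  set mz' := (1 / (n : ℝ)) * ∑ j, z' j with hmz'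
  have hmean : (n:ℝ) * mz = ∑ j, z j := by rw [hmz]; field_simp
  have hmean' : (n:ℝ) * mz' = ∑ j, z' j := by rw [hmz']; field_simp
  have hsum0 : ∑ i, (z i - mz) = 0 := by
    rw [Finset.sum_sub_distrib, Finset.sum_const, Finset.card_univ, Fintype.card_fin,
      nsmul_eq_mul, ← hmean]
    ring
  have hsumδ : ∑ i, (z' i - z i) = (n:ℝ) * (mz' - mz) := by
    rw [Finset.sum_sub_distrib, ← hmean, ← hmean']
    ring
  have hmz01 : 0 ≤ mz ∧ mz ≤ 1 := by
    constructor
    · rw [hmz]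
      exact mul_nonneg (by positivity) (Finset.sum_nonneg fun i _ => (hz01 i).1)
    · have : ∑ j, z j ≤ (n:ℝ) := by
        calc ∑ j, z j ≤ ∑ _j : Fin n, (1:ℝ) := Finset.sum_le_sum fun j _ => (hz01 j).2
          _ = (n:ℝ) := by simp
      rw [hmz]
      calc (1 / (n:ℝ)) * ∑ j, z j ≤ (1 / (n:ℝ)) * (n:ℝ) :=
            mul_le_mul_of_nonneg_left this (by positivity)
        _ = 1 := by field_simp
  -- expansion
  have hexp : ∑ i, (z' i - mz') ^ 2
      = (∑ i, (z i - mz) ^ 2) + (∑ i, ((z' i - z i) - (mz' - mz)) ^ 2)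
        + 2 * (∑ i, (z i - mz) * (z' i - z i)) - (2 * (mz' - mz)) * (∑ i, (z i - mz)) := by
    rw [Finset.mul_sum, Finset.mul_sum, ← Finset.sum_add_distrib, ← Finset.sum_add_distrib,
      ← Finset.sum_sub_distrib]
    exact Finset.sum_congr rfl fun i _ => by ring
  -- bounding the two extra terms
  have hbound1 : ∑ i, ((z' i - z i) - (mz' - mz)) ^ 2 ≤ ∑ i, |z' i - z i| := by
    have e1 : ∑ i, ((z' i - z i) - (mz' - mz)) ^ 2
        = (∑ i, (z' i - z i) ^ 2) - (n:ℝ) * (mz' - mz) ^ 2 := by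
      have hpt : ∀ i, ((z' i - z i) - (mz' - mz)) ^ 2
          = (z' i - z i) ^ 2 - 2 * (mz' - mz) * (z' i - z i) + (mz' - mz) ^ 2 := fun i => by ring
      calc ∑ i, ((z' i - z i) - (mz' - mz)) ^ 2
          = ∑ i, ((z' i - z i) ^ 2 - 2 * (mz' - mz) * (z' i - z i) + (mz' - mz) ^ 2) :=
            Finset.sum_congr rfl fun i _ => hpt i
        _ = (∑ i, (z' i - z i) ^ 2) - 2 * (mz' - mz) * (∑ i, (z' i - z i))
            + (n:ℝ) * (mz' - mz) ^ 2 := by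
            rw [Finset.sum_add_distrib, Finset.sum_sub_distrib, ← Finset.mul_sum,
              Finset.sum_const, Finset.card_univ, Fintype.card_fin, nsmul_eq_mul]
        _ = _ := by rw [hsumδ]; ring
    have e2 : ∑ i, (z' i - z i) ^ 2 ≤ ∑ i, |z' i - z i| := by
      apply Finset.sum_le_sum
      intro i _
      have h1 := (hz01 i).1; have h2 := (hz01 i).2
      have h3 := (hz01' i).1; have h4 := (hz01' i).2
      have habs : |z' i - z i| ≤ 1 := by rw [abs_le]; constructor <;> linarith
      calc (z' i - z i) ^ 2 = |z' i - z i| ^ 2 := (sq_abs _).symm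
        _ ≤ |z' i - z i| * 1 := by rw [sq]; exact mul_le_mul_of_nonneg_left habs (abs_nonneg _)
        _ = |z' i - z i| := mul_one _
    have e3 : 0 ≤ (n:ℝ) * (mz' - mz) ^ 2 := by positivity
    linarith
  have hbound2 : ∑ i, (z i - mz) * (z' i - z i) ≤ ∑ i, |z' i - z i| := by
    apply Finset.sum_le_sum
    intro i _
    have h1 := (hz01 i).1; have h2 := (hz01 i).2
    have habs : |z i - mz| ≤ 1 := by
      rw [abs_le]; constructor <;> [linarith [hmz01.2]; linarith [hmz01.1]]
    calc (z i - mz) * (z' i - z i) ≤ |(z i - mz) * (z' i - z i)| := le_abs_self _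
      _ = |z i - mz| * |z' i - z i| := abs_mul _ _
      _ ≤ 1 * |z' i - z i| := mul_le_mul_of_nonneg_right habs (abs_nonneg _)
      _ = |z' i - z i| := one_mul _
  rw [hexp, hsum0, mul_zero]
  linarith
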